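/- arXiv:math/0512227 — 3 statements merged into one kernel-verified Lean document; each statement's English description precedes it below -/
import Mathlib

section
/- (T_•, ∗̄) is a free associative ℤ-algebra, freely generated by the set of reduced set compositions; equivalently, the products P^{(1)} ∗̄ ⋯ ∗̄ P^{(m)} taken over all finite sequences (P^{(1)},…,P^{(m)}) of reduced set compositions form a ℤ-basis of T_•. -/
set_option linter.unreachableTactic false
set_option linter.unusedTactic false
set_option maxHeartbeats 1000000


open Finset

/-- Candidate set compositions: lists of finite sets of positive naturals. -/
abbrev SC : Type := List (Finset ℕ)

/-- The underlying (ground) set of a list of blocks. -/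
def ground (L : SC) : Finset ℕ := L.foldr (· ∪ ·) ∅

/-- `L` is a set composition of `[n] = {1,…,n}`. -/
def IsSetComp (n : ℕ) (L : SC) : Prop :=
  (∀ B ∈ L, B.Nonempty) ∧ L.Pairwise Disjoint ∧ ground L = Finset.Icc 1 n

/-- The degree of a set composition (largest element of its ground set). -/
def maxG (L : SC) : ℕ := (ground L).sup id

/-- The 1-based rank of `x` inside the finite set `A` (the position of `x` in the
increasing enumeration of `A`, when `x ∈ A`); this is the order preserving
relabelling `A → [|A|]`. -/
def rankIn (A : Finset ℕ) (x : ℕ) : ℕ := (A.filter (· ≤ x)).card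

/-- `P|_A` : intersect the blocks with `A`, delete the empty intersections, and
relabel along the order preserving bijection `A → [|A|]`. -/
def restrictSC (A : Finset ℕ) (L : SC) : SC :=
  (L.map fun B => (B ∩ A).image (rankIn A)).filter fun B => decide B.Nonempty

/-- Shift all entries of all blocks by `p`. -/
def shiftSC (p : ℕ) (L : SC) : SC := L.map (Finset.image (· + p))

/-- The restricted product `∗̄` on set compositions:
`P ∗̄ Q = (P₁,…,P_k, p+Q₁,…,p+Q_l)` for `P ∈ Comp_p`. -/
def barMul (P Q : SC) : SC := P ++ shiftSC (maxG P) Q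

/-- The order-preserving relabelling map `S → T` (`is_{S,T}`), for finite sets
of equal cardinality. -/
def relabelFun (S T : Finset ℕ) (x : ℕ) : ℕ := (T.sort (· ≤ ·)).getD (rankIn S x - 1) 0

/-- Relabel a set composition of `S` along the order-preserving bijection `S → T`. -/
def relabelSC (S T : Finset ℕ) (L : SC) : SC := L.map (Finset.image (relabelFun S T))

variable (R : Type) [CommRing R]

/-- The free module with basis indexed by lists of blocks; the twisted descent
algebra `T_•` is its submodule spanned by the set compositions. -/
abbrev FM := SC →₀ R

/-- `T_•` as a submodule: the span of the set compositions. -/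
noncomputable def Tspan : Submodule R (FM R) :=
  Submodule.span R {f : FM R | ∃ n P, IsSetComp n P ∧ f = Finsupp.single P 1}

/-- The restricted product `∗̄` as a bilinear map. -/
noncomputable def barL : FM R →ₗ[R] FM R →ₗ[R] FM R :=
  Finsupp.lift _ R SC fun P => Finsupp.lift _ R SC fun Q => Finsupp.single (barMul P Q) 1

/-- The symmetrized product `∗̂` on basis elements:
`P ∗̂ Q = Σ is_{[p],A}(P) ∗ is_{[q],B}(Q)` over all `A ⊔ B = [p+q]`, `|A| = p`. -/
noncomputable def hatB (P Q : SC) : FM R :=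
  ∑ A ∈ (Finset.Icc 1 (maxG P + maxG Q)).powerset.filter (fun A => A.card = maxG P),
    Finsupp.single
      (relabelSC (Finset.Icc 1 (maxG P)) A P ++
        relabelSC (Finset.Icc 1 (maxG Q)) ((Finset.Icc 1 (maxG P + maxG Q)) \ A) Q) 1

/-- The symmetrized product `∗̂` as a bilinear map. -/
noncomputable def hatL : FM R →ₗ[R] FM R →ₗ[R] FM R :=
  Finsupp.lift _ R SC fun P => Finsupp.lift _ R SC fun Q => hatB R P Q

/-- `T_• ⊗ T_•`, realized as the free module on pairs of basis elements. -/
abbrev FM2 := (SC × SC) →₀ R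

/-- `T_• ⊗ T_• ⊗ T_•`, realized as the free module on triples of basis elements. -/
abbrev FM3 := (SC × SC × SC) →₀ R

/-- The restricted coproduct `δ̄ (P) = Σ_{p=0}^n P|_{[p]} ⊗ P|_{{p+1,…,n}}`. -/
noncomputable def dBarL : FM R →ₗ[R] FM2 R :=
  Finsupp.lift _ R SC fun P =>
    ∑ p ∈ Finset.range (maxG P + 1),
      Finsupp.single
        (restrictSC (Finset.Icc 1 p) P, restrictSC (Finset.Icc (p+1) (maxG P)) P) 1

/-- The cosymmetrized coproduct `δ̂ (P) = Σ_{A ⊔ B = [n]} P|_A ⊗ P|_B`. -/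
noncomputable def dHatL : FM R →ₗ[R] FM2 R :=
  Finsupp.lift _ R SC fun P =>
    ∑ A ∈ (Finset.Icc 1 (maxG P)).powerset,
      Finsupp.single (restrictSC A P, restrictSC ((Finset.Icc 1 (maxG P)) \ A) P) 1

/-- Apply a coproduct to the first tensor factor:  `d ⊗ id : T⊗T → T⊗T⊗T`. -/
noncomputable def applyFst (d : FM R →ₗ[R] FM2 R) : FM2 R →ₗ[R] FM3 R :=
  Finsupp.lift _ R (SC × SC) fun PQ =>
    Finsupp.mapDomain (fun RS : SC × SC => (RS.1, RS.2, PQ.2)) (d (Finsupp.single PQ.1 1))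

/-- Apply a coproduct to the second tensor factor:  `id ⊗ d : T⊗T → T⊗T⊗T`. -/
noncomputable def applySnd (d : FM R →ₗ[R] FM2 R) : FM2 R →ₗ[R] FM3 R :=
  Finsupp.lift _ R (SC × SC) fun PQ =>
    Finsupp.mapDomain (fun RS : SC × SC => (PQ.1, RS.1, RS.2)) (d (Finsupp.single PQ.2 1))

/-- `ε ⊗ id : T⊗T → T`, where `ε` is the projection onto `T_0 ≅ R`
(the coefficient of the empty set composition). -/
noncomputable def epsFst : FM2 R →ₗ[R] FM R :=
  Finsupp.lift _ R (SC × SC) fun PQ =>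
    if PQ.1 = ([] : SC) then Finsupp.single PQ.2 1 else 0

/-- `id ⊗ ε : T⊗T → T`. -/
noncomputable def epsSnd : FM2 R →ₗ[R] FM R :=
  Finsupp.lift _ R (SC × SC) fun PQ =>
    if PQ.2 = ([] : SC) then Finsupp.single PQ.1 1 else 0

/-- The twist map `x ⊗ y ↦ y ⊗ x` on `T_• ⊗ T_•`. -/
noncomputable def twistL : FM2 R →ₗ[R] FM2 R :=
  Finsupp.lift _ R (SC × SC) fun PQ => Finsupp.single (PQ.2, PQ.1) 1

/-- The counit: projection onto the degree-0 component `T_0 ≅ R`. -/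
noncomputable def counitL : FM R →ₗ[R] R :=
  Finsupp.lift _ R SC fun P => if P = ([] : SC) then 1 else 0

/-- A set composition `(P₁,…,P_k)` of `[n]` is reduced if it is non-trivial and
there is no pair `(a, m)` with `1 ≤ a < k` and `m < n` such that
`P₁ ∪ ⋯ ∪ P_a = [m]`. -/
def Reduced (n : ℕ) (P : SC) : Prop :=
  IsSetComp n P ∧ 0 < n ∧
    ∀ a m, 0 < a → a < P.length → m < n → ground (P.take a) ≠ Finset.Icc 1 m

/-- Finite sequences of reduced set compositions. -/
abbrev RedSeq := {F : List SC // ∀ Q ∈ F, ∃ m, Reduced m Q}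

section AuxProof

lemma ground_cons (B : Finset ℕ) (L : SC) : ground (B :: L) = B ∪ ground L := rfl

lemma ground_append (L M : SC) : ground (L ++ M) = ground L ∪ ground M := by
  induction L with
  | nil => simp [ground]
  | cons B L ih => simp only [List.cons_append, ground_cons, ih, Finset.union_assoc]

lemma mem_ground {x : ℕ} {L : SC} : x ∈ ground L ↔ ∃ B ∈ L, x ∈ B := by
  induction L with
  | nil => simp [ground]
  | cons B L ih => simp [ground_cons, Finset.mem_union, ih]

lemma ground_mapImage (f : ℕ → ℕ) (L : SC) :
    ground (L.map (Finset.image f)) = (ground L).image f := by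
  induction L with
  | nil => simp [ground]
  | cons B L ih => simp [ground_cons, ih, Finset.image_union]

lemma sup_Icc_one (n : ℕ) : (Finset.Icc 1 n).sup id = n := by
  rcases Nat.eq_zero_or_pos n with h | h
  · subst h; simp
  · apply le_antisymm
    · exact Finset.sup_le fun x hx => (Finset.mem_Icc.mp hx).2
    · exact Finset.le_sup (f := id) (Finset.mem_Icc.mpr ⟨h, le_refl n⟩)

lemma maxG_eq {n : ℕ} {L : SC} (h : IsSetComp n L) : maxG L = n := by
  rw [maxG, h.2.2, sup_Icc_one]

lemma isSetComp_barMul {p q : ℕ} {P Q : SC} (hP : IsSetComp p P) (hQ : IsSetComp q Q) :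
    IsSetComp (p + q) (barMul P Q) := by
  have hmax : maxG P = p := maxG_eq hP
  obtain ⟨hP1, hP2, hP3⟩ := hP
  obtain ⟨hQ1, hQ2, hQ3⟩ := hQ
  rw [barMul, hmax]
  refine ⟨?_, ?_, ?_⟩
  · intro B hB
    rcases List.mem_append.mp hB with h | h
    · exact hP1 B h
    · obtain ⟨C, hC, rfl⟩ := List.mem_map.mp h
      exact (hQ1 C hC).image _
  · rw [List.pairwise_append]
    refine ⟨hP2, ?_, ?_⟩
    · rw [shiftSC, List.pairwise_map]
      refine hQ2.imp fun hab => ?_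
      exact (Finset.disjoint_image (add_left_injective p)).mpr hab
    · intro B hB C hC
      obtain ⟨C₀, hC₀, rfl⟩ := List.mem_map.mp hC
      rw [Finset.disjoint_left]
      intro x hxB hxC
      have hx1 : x ∈ Finset.Icc 1 p := hP3 ▸ mem_ground.mpr ⟨B, hB, hxB⟩
      obtain ⟨y, hy, rfl⟩ := Finset.mem_image.mp hxC
      have hy1 : y ∈ Finset.Icc 1 q := hQ3 ▸ mem_ground.mpr ⟨C₀, hC₀, hy⟩
      rw [Finset.mem_Icc] at hx1 hy1
      omega
  · rw [ground_append, hP3, shiftSC, ground_mapImage, hQ3]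
    ext x
    simp only [Finset.mem_union, Finset.mem_image, Finset.mem_Icc]
    constructor
    · rintro (h | ⟨y, hy, rfl⟩) <;> omega
    · intro hx
      rcases le_or_gt x p with h | h
      · left; omega
      · right; exact ⟨x - p, by omega, by omega⟩

lemma isSetComp_nil : IsSetComp 0 [] := by
  refine ⟨by simp, by simp, ?_⟩
  ext x; simp [ground]

lemma isSetComp_prod (F : List SC) (h : ∀ Q ∈ F, ∃ m, IsSetComp m Q) :
    ∃ n, IsSetComp n (F.foldr barMul []) := by
  induction F with
  | nil => exact ⟨0, isSetComp_nil⟩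
  | cons P F ih =>
    obtain ⟨p, hp⟩ := h P List.mem_cons_self
    obtain ⟨n, hn⟩ := ih fun Q hQ => h Q (List.mem_cons_of_mem _ hQ)
    exact ⟨p + n, isSetComp_barMul hp hn⟩

lemma Reduced.ne_nil {m : ℕ} {P : SC} (h : Reduced m P) : P ≠ [] := by
  intro hP
  have hg := h.1.2.2
  rw [hP] at hg
  have h1 : (1:ℕ) ∈ ground ([] : SC) := by
    rw [hg]; exact Finset.mem_Icc.mpr ⟨le_refl 1, h.2.1⟩
  simp [ground] at h1

lemma ground_take_subset (L : SC) (a : ℕ) : ground (L.take a) ⊆ ground L := by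
  intro x hx
  obtain ⟨B, hB, hxB⟩ := mem_ground.mp hx
  exact mem_ground.mpr ⟨B, List.mem_of_mem_take hB, hxB⟩

lemma key_eq {p q : ℕ} {P Q X Y : SC} (hP : Reduced p P) (hQ : Reduced q Q)
    (hlen : P.length ≤ Q.length) (h : P ++ X = Q ++ Y) : P = Q := by
  have hPQ : P = Q.take P.length := by
    have h1 := congrArg (List.take P.length) h
    rwa [List.take_left, List.take_append_of_le_length hlen] at h1
  rcases eq_or_lt_of_le hlen with heq | hlt
  · rw [hPQ, heq, List.take_length]
  · exfalso
    have hgr : ground (Q.take P.length) = Finset.Icc 1 p := by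
      rw [← hPQ]; exact hP.1.2.2
    have hpq : p ≤ q := by
      have hp1 : p ∈ Finset.Icc 1 p := Finset.mem_Icc.mpr ⟨hP.2.1, le_refl p⟩
      have h2 := ground_take_subset Q P.length (hgr ▸ hp1)
      rw [hQ.1.2.2] at h2
      exact (Finset.mem_Icc.mp h2).2
    have hlenP : 0 < P.length := List.length_pos_iff.mpr hP.ne_nil
    rcases eq_or_lt_of_le hpq with hpq' | hpq'
    · have hdne : Q.drop P.length ≠ [] := by
        intro hd
        have hld : (Q.drop P.length).length = 0 := by rw [hd]; rfl
        rw [List.length_drop] at hld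
        omega
      have hBmem : (Q.drop P.length).head hdne ∈ Q.drop P.length := List.head_mem hdne
      set B := (Q.drop P.length).head hdne
      have hBQ : B ∈ Q := List.mem_of_mem_drop hBmem
      obtain ⟨x, hx⟩ := hQ.1.1 B hBQ
      have hxg : x ∈ ground Q := mem_ground.mpr ⟨B, hBQ, hx⟩
      rw [hQ.1.2.2, ← hpq', ← hgr] at hxg
      obtain ⟨C, hC, hxC⟩ := mem_ground.mp hxg
      have hpw := hQ.1.2.1
      rw [← List.take_append_drop P.length Q, List.pairwise_append] at hpw
      exact Finset.disjoint_left.mp (hpw.2.2 C hC B hBmem) hxC hx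
    · exact hQ.2.2 P.length p hlenP hlt hpq' hgr

lemma shift_injective (p : ℕ) : Function.Injective (shiftSC p) := fun X Y h =>
  List.map_injective_iff.mpr (Finset.image_injective (add_left_injective p)) h

lemma prod_ne_nil {F : List SC} (hF : ∀ Q ∈ F, ∃ m, Reduced m Q) (h : F ≠ []) :
    F.foldr barMul [] ≠ [] := by
  cases F with
  | nil => exact absurd rfl h
  | cons P F =>
    obtain ⟨m, hm⟩ := hF P List.mem_cons_self
    show barMul P _ ≠ []
    rw [barMul]
    intro hc
    exact hm.ne_nil (List.append_eq_nil_iff.mp hc).1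

lemma prod_inj : ∀ F G : List SC, (∀ A ∈ F, ∃ m, Reduced m A) → (∀ A ∈ G, ∃ m, Reduced m A) →
    F.foldr barMul [] = G.foldr barMul [] → F = G := by
  intro F
  induction F with
  | nil =>
    intro G _ hG h
    cases G with
    | nil => rfl
    | cons Q G' => exact absurd h.symm (prod_ne_nil hG (by simp))
  | cons P F' ih =>
    intro G hF hG h
    cases G with
    | nil => exact absurd h (prod_ne_nil hF (by simp))
    | cons Q G' =>
      obtain ⟨p, hp⟩ := hF P List.mem_cons_self
      obtain ⟨q, hq⟩ := hG Q List.mem_cons_self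
      have h' : P ++ shiftSC (maxG P) (F'.foldr barMul []) =
          Q ++ shiftSC (maxG Q) (G'.foldr barMul []) := h
      have hPQ : P = Q := by
        rcases le_total P.length Q.length with hle | hle
        · exact key_eq hp hq hle h'
        · exact (key_eq hq hp hle h'.symm).symm
      subst hPQ
      have h2 := List.append_cancel_left h'
      have h3 := shift_injective (maxG P) h2
      rw [ih G' (fun A hA => hF A (List.mem_cons_of_mem _ hA))
        (fun A hA => hG A (List.mem_cons_of_mem _ hA)) h3]

lemma factor : ∀ k (L : SC), L.length ≤ k → ∀ n, IsSetComp n L →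
    ∃ F : List SC, (∀ Q ∈ F, ∃ m, Reduced m Q) ∧ F.foldr barMul [] = L := by
  intro k
  induction k with
  | zero =>
    intro L hL n h
    rw [List.length_eq_zero_iff.mp (Nat.le_zero.mp hL)]
    exact ⟨[], by simp, rfl⟩
  | succ k ih =>
    intro L hL n hsc
    rcases eq_or_ne L [] with rfl | hne
    · exact ⟨[], by simp, rfl⟩
    classical
    obtain ⟨h1, h2, h3⟩ := hsc
    have hlpos : 0 < L.length := List.length_pos_iff.mpr hne
    have hn : 0 < n := by
      obtain ⟨B, hB⟩ := List.exists_mem_of_ne_nil L hne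
      obtain ⟨x, hx⟩ := h1 B hB
      have hxm : x ∈ Finset.Icc 1 n := h3 ▸ mem_ground.mpr ⟨B, hB, hx⟩
      rw [Finset.mem_Icc] at hxm
      omega
    have hex : ∃ a, 0 < a ∧ ∃ m, 0 < m ∧ ground (L.take a) = Finset.Icc 1 m :=
      ⟨L.length, hlpos, n, hn, by rw [List.take_length]; exact h3⟩
    have hspec := Nat.find_spec hex
    have hmin : ∀ a, a < Nat.find hex →
        ¬(0 < a ∧ ∃ m, 0 < m ∧ ground (L.take a) = Finset.Icc 1 m) :=
      fun a h => Nat.find_min hex h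
    have ha₀le : Nat.find hex ≤ L.length :=
      Nat.find_min' hex ⟨hlpos, n, hn, by rw [List.take_length]; exact h3⟩
    set a₀ := Nat.find hex with ha₀def
    obtain ⟨ha₀pos, m₀, hm₀pos, hg⟩ := hspec
    set P := L.take a₀ with hPdef
    set D := L.drop a₀ with hDdef
    have hPsc : IsSetComp m₀ P :=
      ⟨fun B hB => h1 B (List.mem_of_mem_take hB),
        List.Pairwise.sublist (List.take_sublist a₀ L) h2, hg⟩
    have hPred : Reduced m₀ P := by
      refine ⟨hPsc, hm₀pos, ?_⟩
      intro a m hapos halen hm hgr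
      have haa₀ : a < a₀ := by
        rw [hPdef, List.length_take] at halen; omega
      have htake : P.take a = L.take a := by
        rw [hPdef, List.take_take]
        congr 1
        omega
      rw [htake] at hgr
      rcases Nat.eq_zero_or_pos m with rfl | hmpos
      · have hane : L.take a ≠ [] := by
          intro hc
          have hlc : (L.take a).length = 0 := by rw [hc]; rfl
          rw [List.length_take] at hlc
          omega
        obtain ⟨B, hB⟩ := List.exists_mem_of_ne_nil _ hane
        obtain ⟨x, hx⟩ := h1 B (List.mem_of_mem_take hB)
        have hxg : x ∈ ground (L.take a) := mem_ground.mpr ⟨B, hB, hx⟩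
        rw [hgr, Finset.mem_Icc] at hxg
        omega
      · exact hmin a haa₀ ⟨hapos, m, hmpos, hgr⟩
    have hpwTD : ∀ C ∈ P, ∀ B ∈ D, Disjoint C B := by
      have hpw := h2
      rw [← List.take_append_drop a₀ L, List.pairwise_append] at hpw
      exact hpw.2.2
    have hDent : ∀ B ∈ D, ∀ x ∈ B, m₀ < x ∧ x ≤ n := by
      intro B hB x hx
      have hxn : x ∈ Finset.Icc 1 n := h3 ▸ mem_ground.mpr ⟨B, List.mem_of_mem_drop hB, hx⟩
      have hxm : x ∉ Finset.Icc 1 m₀ := by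
        rw [← hg]
        intro hc
        obtain ⟨C, hC, hxC⟩ := mem_ground.mp hc
        exact Finset.disjoint_left.mp (hpwTD C hC B hB) hxC hx
      rw [Finset.mem_Icc] at hxn hxm
      omega
    have hgD : ground D = Finset.Icc (m₀ + 1) n := by
      apply Finset.Subset.antisymm
      · intro x hx
        obtain ⟨B, hB, hxB⟩ := mem_ground.mp hx
        have := hDent B hB x hxB
        rw [Finset.mem_Icc]; omega
      · intro x hx
        rw [Finset.mem_Icc] at hx
        have hxL : x ∈ ground L := by rw [h3, Finset.mem_Icc]; omega
        rw [← List.take_append_drop a₀ L, ground_append] at hxL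
        rcases Finset.mem_union.mp hxL with hmem | hmem
        · rw [hg, Finset.mem_Icc] at hmem; omega
        · exact hmem
    set D' : SC := D.map (Finset.image (· - m₀)) with hD'def
    have hD'sc : IsSetComp (n - m₀) D' := by
      refine ⟨?_, ?_, ?_⟩
      · intro B hB
        obtain ⟨C, hC, rfl⟩ := List.mem_map.mp hB
        exact (h1 C (List.mem_of_mem_drop hC)).image _
      · rw [hD'def, List.pairwise_map]
        refine List.Pairwise.imp_of_mem ?_ (List.Pairwise.sublist (List.drop_sublist a₀ L) h2)
        intro B C hB hC hBC
        rw [Finset.disjoint_left]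
        rintro z hz1 hz2
        obtain ⟨x, hx, rfl⟩ := Finset.mem_image.mp hz1
        obtain ⟨y, hy, hxy⟩ := Finset.mem_image.mp hz2
        have hx' := hDent B hB x hx
        have hy' := hDent C hC y hy
        have hxyeq : x = y := by omega
        exact Finset.disjoint_left.mp hBC hx (hxyeq ▸ hy)
      · rw [hD'def, ground_mapImage, hgD]
        ext z
        simp only [Finset.mem_image, Finset.mem_Icc]
        constructor
        · rintro ⟨y, hy, rfl⟩; omega
        · intro hz; exact ⟨z + m₀, by omega, by omega⟩
    have hDlen : D'.length ≤ k := by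
      rw [hD'def, List.length_map, hDdef, List.length_drop]; omega
    obtain ⟨G, hGred, hGprod⟩ := ih D' hDlen (n - m₀) hD'sc
    refine ⟨P :: G, ?_, ?_⟩
    · intro Q hQ
      rcases List.mem_cons.mp hQ with rfl | hQ
      · exact ⟨m₀, hPred⟩
      · exact hGred Q hQ
    · show barMul P (G.foldr barMul []) = L
      rw [hGprod, barMul, maxG_eq hPsc]
      have hshift : shiftSC m₀ D' = D := by
        rw [shiftSC, hD'def, List.map_map]
        conv_rhs => rw [← List.map_id D]
        apply List.map_congr_left
        intro B hB
        simp only [Function.comp, id]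
        ext x
        simp only [Finset.mem_image]
        constructor
        · rintro ⟨y, ⟨z, hz, rfl⟩, rfl⟩
          have hz' := hDent B hB z hz
          have hze : z - m₀ + m₀ = z := by omega
          rwa [hze]
        · intro hx
          exact ⟨x - m₀, ⟨x, hx, rfl⟩, by have := hDent B hB x hx; omega⟩
      rw [hshift, hPdef, hDdef, List.take_append_drop]

end AuxProof

/-- **Theorem.** `(T_•, ∗̄)` is a free associative ℤ-algebra, freely generated by
the reduced set compositions: the products `P⁽¹⁾ ∗̄ ⋯ ∗̄ P⁽ᵐ⁾` over all finite
sequences of reduced set compositions form a ℤ-basis of `T_•`. -/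


theorem bar_free_algebra :
    LinearIndependent ℤ
      (fun F : RedSeq => (Finsupp.single (F.1.foldr barMul []) 1 : FM ℤ)) ∧
    Submodule.span ℤ
      (Set.range fun F : RedSeq => (Finsupp.single (F.1.foldr barMul []) 1 : FM ℤ))
      = Tspan ℤ := by
  have hinj : Function.Injective (fun F : RedSeq => F.1.foldr barMul []) := by
    intro F G h
    exact Subtype.ext (prod_inj F.1 G.1 F.2 G.2 h)
  constructor
  · have h := (Finsupp.basisSingleOne (R := ℤ) (ι := SC)).linearIndependent.comp _ hinj
    convert h using 1
    · funext F; simp [Function.comp]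
    · exact Subsingleton.elim _ _
  · apply le_antisymm
    · rw [Submodule.span_le]
      rintro _ ⟨F, rfl⟩
      apply Submodule.subset_span
      obtain ⟨n, hn⟩ := isSetComp_prod F.1 (fun Q hQ => (F.2 Q hQ).imp fun m hm => hm.1)
      exact ⟨n, _, hn, rfl⟩
    · rw [Tspan, Submodule.span_le]
      rintro f ⟨n, P, hP, rfl⟩
      apply Submodule.subset_span
      obtain ⟨F, hF, hprod⟩ := factor P.length P le_rfl n hP
      exact ⟨⟨F, hF⟩, by simp [hprod]⟩
end

section
/- The ℤ-linear map ι: S_• → T_• sending α ∈ S_n to ({α(1)},…,{α(n)}) is injective and is a morphism of graded bialgebras from (S_•, ×, δ̂) to (T_•, ∗̄, δ̂): for all permutations α, β one has ι(α × β) = ι(α) ∗̄ ι(β), and δ̂(ι(α)) = (ι ⊗ ι)(δ̂(α)). Hence (S_•, ×, δ̂) embeds into (T_•, ∗̄, δ̂) as a Hopf subalgebra. -/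
set_option linter.unreachableTactic false
set_option linter.unusedTactic false
set_option maxHeartbeats 1000000


open Finset

variable (R : Type) [CommRing R]

/-- `w` is the word `(α(1),…,α(n))` of a permutation `α ∈ S_n`. -/
def IsPermWord (n : ℕ) (w : List ℕ) : Prop := w.Nodup ∧ w.toFinset = Finset.Icc 1 n

/-- The embedding of permutations into set compositions:
`α ↦ ({α(1)},…,{α(n)})`. -/
def iotaW (w : List ℕ) : SC := w.map fun a => ({a} : Finset ℕ)

/-- Concatenation product of permutation words: `α × β = α · (β + n)`. -/
def concatW (u v : List ℕ) : List ℕ := u ++ v.map (· + u.length)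

/-- `st(w|_S)`: the subword of `w` of entries lying in `S`, standardized. -/
def stW (S : Finset ℕ) (w : List ℕ) : List ℕ :=
  (w.filter fun a => decide (a ∈ S)).map (rankIn S)

/-- The ℤ-linear embedding `ι : S_• → T_•`, `α ↦ ({α(1)},…,{α(n)})`. -/
noncomputable def iotaL : (List ℕ →₀ ℤ) →ₗ[ℤ] FM ℤ :=
  Finsupp.lift _ ℤ _ fun w => Finsupp.single (iotaW w) 1

/-- `ι ⊗ ι : S_• ⊗ S_• → T_• ⊗ T_•`. -/
noncomputable def iota2L : ((List ℕ × List ℕ) →₀ ℤ) →ₗ[ℤ] FM2 ℤ :=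
  Finsupp.lift _ ℤ _ fun uv => Finsupp.single (iotaW uv.1, iotaW uv.2) 1

/-- The cosymmetrized coproduct on `S_•`:
`δ̂(α) = Σ_{S ⊔ T = [n]} st(α|_S) ⊗ st(α|_T)`. -/
noncomputable def dHatS : (List ℕ →₀ ℤ) →ₗ[ℤ] ((List ℕ × List ℕ) →₀ ℤ) :=
  Finsupp.lift _ ℤ _ fun w =>
    ∑ A ∈ (Finset.Icc 1 w.length).powerset,
      Finsupp.single (stW A w, stW ((Finset.Icc 1 w.length) \ A) w) 1

lemma iotaW_injective : Function.Injective iotaW := by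
  intro u v h
  have := List.map_injective_iff.2 (fun a b (h : ({a} : Finset ℕ) = {b}) =>
    Finset.singleton_injective h) h
  exact this

lemma iotaL_eq : iotaL = Finsupp.lmapDomain ℤ ℤ iotaW := by
  apply Finsupp.lhom_ext
  intro a b
  simp [iotaL, Finsupp.mapDomain_single, Finsupp.smul_single]

lemma ground_iotaW (w : List ℕ) : ground (iotaW w) = w.toFinset := by
  induction w with
  | nil => rfl
  | cons a t ih =>
    simp only [iotaW, ground, List.map_cons, List.foldr_cons, List.toFinset_cons] at ih ⊢
    rw [ih]
    ext x; simp

lemma sup_Icc (m : ℕ) : (Finset.Icc 1 m).sup id = m := by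
  rcases Nat.eq_zero_or_pos m with h | h
  · subst h; simp
  · apply le_antisymm
    · exact Finset.sup_le fun x hx => by simp at hx; exact hx.2
    · exact Finset.le_sup (f := id) (by simp; omega)

lemma maxG_iotaW {n : ℕ} {w : List ℕ} (h : IsPermWord n w) : maxG (iotaW w) = n := by
  unfold maxG
  rw [ground_iotaW, h.2, sup_Icc]

lemma length_permWord {n : ℕ} {w : List ℕ} (h : IsPermWord n w) : w.length = n := by
  have := List.toFinset_card_of_nodup h.1
  rw [h.2] at this
  simpa using this.symm

lemma restrict_iotaW (A : Finset ℕ) (w : List ℕ) :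
    restrictSC A (iotaW w) = iotaW (stW A w) := by
  induction w with
  | nil => rfl
  | cons a t ih =>
    by_cases ha : a ∈ A
    · have h1 : ({a} : Finset ℕ) ∩ A = {a} := by
        ext x; simp; rintro rfl; exact ha
      simp only [restrictSC, iotaW, stW, List.map_cons, List.filter_cons] at ih ⊢
      rw [h1]
      simp only [Finset.image_singleton, if_pos, Finset.singleton_nonempty,
        decide_true, decide_eq_true ha, List.map_cons, if_true]
      exact congrArg _ ih
    · have h1 : ({a} : Finset ℕ) ∩ A = ∅ := by
        ext x; simp; rintro rfl; exact ha
      simp only [restrictSC, iotaW, stW, List.map_cons, List.filter_cons] at ih ⊢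
      rw [h1]
      simp only [Finset.image_empty, Finset.not_nonempty_empty, decide_false,
        decide_eq_false ha, if_false, Bool.false_eq_true]
      exact ih

/-- **Theorem.** The ℤ-linear map `ι : S_• → T_•`, `α ↦ ({α(1)},…,{α(n)})`, is
an injective morphism of graded bialgebras from `(S_•, ×, δ̂)` to
`(T_•, ∗̄, δ̂)` : `ι(α × β) = ι(α) ∗̄ ι(β)` and `δ̂(ι(α)) = (ι ⊗ ι)(δ̂(α))`.
Hence `(S_•, ×, δ̂)` embeds into `(T_•, ∗̄, δ̂)` as a Hopf subalgebra. -/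
theorem perm_embedding_cocommutative :
    Function.Injective ⇑iotaL ∧
    (∀ (m k : ℕ) (α β : List ℕ), IsPermWord m α → IsPermWord k β →
        iotaW (concatW α β) = barMul (iotaW α) (iotaW β)) ∧
    (∀ (n : ℕ) (α : List ℕ), IsPermWord n α →
        dHatL ℤ (Finsupp.single (iotaW α) 1) = iota2L (dHatS (Finsupp.single α 1))) := by
  refine ⟨?_, ?_, ?_⟩
  · rw [iotaL_eq]
    exact Finsupp.mapDomain_injective iotaW_injective
  · intro m k α β hα hβ
    have hm := maxG_iotaW hα
    have hl := length_permWord hα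
    unfold barMul concatW
    rw [hm, ← hl]
    unfold iotaW shiftSC
    simp [List.map_map, Function.comp_def, Finset.image_singleton]
  · intro n α hα
    have hm := maxG_iotaW hα
    have hl := length_permWord hα
    rw [dHatL, dHatS]
    simp only [Finsupp.lift_apply, Finsupp.sum_single_index, zero_smul, one_smul]
    rw [hm, hl, map_sum]
    refine Finset.sum_congr rfl fun A hA => ?_
    rw [iota2L]
    simp only [Finsupp.lift_apply, Finsupp.sum_single_index, zero_smul, one_smul]
    rw [restrict_iotaW, restrict_iotaW]
end

section
/- An increasing tree (T,λ) is left increasing (i.e. lies in the image of Inc) if and only if, for every pair of branchings b, b′ of T such that b is to the left of b′ (b ≺ b′ in the left-to-right order on B(T)) and the vertices of b and b′ do not lie on a common path connecting a leaf of T with the root of T, one has λ(b) < λ(b′). -/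
set_option linter.unreachableTactic false
set_option linter.unusedTactic false
set_option maxHeartbeats 1000000


open Finset

variable (R : Type) [CommRing R]

inductive PTree : Type
  | eps : PTree
  | wedge : PTree → PTree → List PTree → PTree

inductive LTree : Type
  | eps : LTree
  | wedge : ℕ → LTree → LTree → List LTree → LTree

namespace LTree

def levels : LTree → List ℕ
  | .eps => []
  | .wedge r t0 t1 rest =>
      r :: (t0.levels ++ t1.levels ++ (rest.attach.map (fun x => x.1.levels)).flatten)
decreasing_by all_goals (first
  | (have h := List.sizeOf_lt_of_mem x.2; simp_wf; simp at h; omega)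
  | (have h := List.sizeOf_lt_of_mem x.2; simp_wf; omega)
  | (simp_wf; omega))

def numLevels (t : LTree) : ℕ := t.levels.foldr max 0

def brLevels : LTree → List ℕ
  | .eps => []
  | .wedge r t0 t1 rest =>
      t0.brLevels ++ r :: t1.brLevels ++
        (rest.attach.map (fun x => r :: x.1.brLevels)).flatten
decreasing_by all_goals (first
  | (have h := List.sizeOf_lt_of_mem x.2; simp_wf; simp at h; omega)
  | (have h := List.sizeOf_lt_of_mem x.2; simp_wf; omega)
  | (simp_wf; omega))

def addLevels (c : ℕ) : LTree → LTree
  | .eps => .eps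
  | .wedge r t0 t1 rest =>
      .wedge (r + c) (t0.addLevels c) (t1.addLevels c)
        (rest.attach.map (fun x => x.1.addLevels c))
decreasing_by all_goals (first
  | (have h := List.sizeOf_lt_of_mem x.2; simp_wf; simp at h; omega)
  | (have h := List.sizeOf_lt_of_mem x.2; simp_wf; omega)
  | (simp_wf; omega))

end LTree

def Fgt : LTree → PTree
  | .eps => .eps
  | .wedge _ t0 t1 rest => .wedge (Fgt t0) (Fgt t1) (rest.attach.map (fun x => Fgt x.1))
decreasing_by all_goals (first
  | (have h := List.sizeOf_lt_of_mem x.2; simp_wf; simp at h; omega)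
  | (have h := List.sizeOf_lt_of_mem x.2; simp_wf; omega)
  | (simp_wf; omega))

def graftP (s : PTree) : PTree → PTree
  | .eps => s
  | .wedge t0 t1 rest => .wedge (graftP s t0) t1 rest

def Inc : PTree → LTree
  | .eps => .eps
  | .wedge t0 t1 rest =>
      let incs := Inc t0 :: Inc t1 :: rest.attach.map (fun x => Inc x.1)
      let offs := (incs.map LTree.numLevels).scanl (· + ·) 1
      match (incs.zip offs).map (fun p => p.1.addLevels p.2) with
      | s0 :: s1 :: srest => .wedge 1 s0 s1 srest
      | _ => .eps
decreasing_by all_goals (first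
  | (have h := List.sizeOf_lt_of_mem x.2; simp_wf; simp at h; omega)
  | (have h := List.sizeOf_lt_of_mem x.2; simp_wf; omega)
  | (simp_wf; omega))

def brPaths : LTree → List (List ℕ)
  | .eps => []
  | .wedge _ t0 t1 rest =>
      (brPaths t0).map (fun p => 0 :: p) ++
        ((((t1 :: rest).attach.map (fun x => brPaths x.1)).zipIdx.map
          (fun is => ([] : List ℕ) :: is.1.map (fun p => (is.2 + 1) :: p))).flatten)
decreasing_by all_goals (first
  | (have h := List.sizeOf_lt_of_mem x.2; simp_wf; simp at h; omega)
  | (have h := List.sizeOf_lt_of_mem x.2; simp_wf; omega)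
  | (simp_wf; omega))

def sigmaOf (t : LTree) : List (Finset ℕ) :=
  let w := t.brLevels
  (List.range (w.foldr max 0)).map fun i =>
    ((List.range w.length).filter (fun j => w.getD j 0 = i + 1)).toFinset.image (· + 1)

/-- The level function is strictly increasing from the root down, all levels
being `> lo`: this expresses that levels strictly increase along every path
joining a leaf to the root. -/
inductive IncrFrom : ℕ → LTree → Prop
  | eps (lo : ℕ) : IncrFrom lo .eps
  | wedge (lo r : ℕ) (t0 t1 : LTree) (rest : List LTree) :
      lo < r → IncrFrom r t0 → IncrFrom r t1 → (∀ t ∈ rest, IncrFrom r t) →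
      IncrFrom lo (.wedge r t0 t1 rest)

/-- An increasing tree: the level function is strictly increasing along every
path from a leaf to the root, and its set of values is `[k]` for some `k ≥ 0`
(it is standard). -/
def IsIncTree (t : LTree) : Prop :=
  IncrFrom 0 t ∧ t.levels.toFinset = Finset.Icc 1 t.numLevels

/-- Two vertices, recorded by their root-to-vertex paths of child indices, lie
on a common path connecting a leaf with the root iff one is an ancestor of the
other, i.e. iff one path is a prefix of the other. -/
def OnCommonPath (p q : List ℕ) : Prop := p <+: q ∨ q <+: p


namespace LTree

lemma attach_map' {α β} (l : List α) (g : α → β) :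
    (l.attach.map fun x => g x.1) = l.map g := by
  rw [show (fun x : {x // x ∈ l} => g x.1) = g ∘ (Subtype.val) from rfl, ← List.map_map,
    List.attach_map_subtype_val]

@[simp] lemma levels_eps : (LTree.eps).levels = [] := by simp [levels]

@[simp] lemma levels_wedge (r : ℕ) (t0 t1 : LTree) (rest : List LTree) :
    (LTree.wedge r t0 t1 rest).levels
      = r :: (t0.levels ++ t1.levels ++ (rest.map levels).flatten) := by
  rw [levels, attach_map' rest levels]

@[simp] lemma brLevels_eps : (LTree.eps).brLevels = [] := by simp [brLevels]

@[simp] lemma brLevels_wedge (r : ℕ) (t0 t1 : LTree) (rest : List LTree) :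
    (LTree.wedge r t0 t1 rest).brLevels
      = t0.brLevels ++ r :: t1.brLevels ++ (rest.map (fun u => r :: u.brLevels)).flatten := by
  rw [brLevels, attach_map' rest (fun u => r :: u.brLevels)]

@[simp] lemma addLevels_eps (c : ℕ) : (LTree.eps).addLevels c = .eps := by simp [addLevels]

@[simp] lemma addLevels_wedge (c r : ℕ) (t0 t1 : LTree) (rest : List LTree) :
    (LTree.wedge r t0 t1 rest).addLevels c
      = .wedge (r + c) (t0.addLevels c) (t1.addLevels c) (rest.map (addLevels c)) := by
  rw [addLevels, attach_map' rest (addLevels c)]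

end LTree

@[simp] lemma Fgt_eps : Fgt .eps = .eps := by simp [Fgt]

@[simp] lemma Fgt_wedge (r : ℕ) (t0 t1 : LTree) (rest : List LTree) :
    Fgt (.wedge r t0 t1 rest) = .wedge (Fgt t0) (Fgt t1) (rest.map Fgt) := by
  rw [Fgt, LTree.attach_map' rest Fgt]

@[simp] lemma brPaths_eps : brPaths .eps = [] := by simp [brPaths]

@[simp] lemma brPaths_wedge (r : ℕ) (t0 t1 : LTree) (rest : List LTree) :
    brPaths (.wedge r t0 t1 rest)
      = (brPaths t0).map (0 :: ·) ++
        (((t1 :: rest).map brPaths).zipIdx.map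
          (fun is => ([] : List ℕ) :: is.1.map (fun p => (is.2 + 1) :: p))).flatten := by
  rw [brPaths, LTree.attach_map' (t1 :: rest) brPaths]

def incList (b : ℕ) : List LTree → List LTree
  | [] => []
  | u :: l => u.addLevels b :: incList (b + u.numLevels) l

lemma zip_scanl_incList (b : ℕ) (l : List LTree) :
    ((l.zip ((l.map LTree.numLevels).scanl (· + ·) b)).map fun p => p.1.addLevels p.2)
      = incList b l := by
  induction l generalizing b with
  | nil => simp [incList]
  | cons u l ih => simp [incList, List.scanl_cons, ih]

@[simp] lemma Inc_eps : Inc .eps = .eps := by simp [Inc]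

lemma Inc_wedge (t0 t1 : PTree) (rest : List PTree) :
    Inc (.wedge t0 t1 rest)
      = .wedge 1 ((Inc t0).addLevels 1) ((Inc t1).addLevels (1 + (Inc t0).numLevels))
          (incList (1 + (Inc t0).numLevels + (Inc t1).numLevels) (rest.map Inc)) := by
  rw [Inc, LTree.attach_map' rest Inc, zip_scanl_incList]
  simp [incList, Nat.add_assoc]

lemma LTree.myrec {P : LTree → Prop} (heps : P .eps)
    (hw : ∀ r t0 t1 rest, P t0 → P t1 → (∀ u ∈ rest, P u) → P (.wedge r t0 t1 rest)) :
    ∀ t, P t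
  | .eps => heps
  | .wedge r t0 t1 rest =>
      hw r t0 t1 rest (LTree.myrec heps hw t0) (LTree.myrec heps hw t1)
        (fun u hu => LTree.myrec heps hw u)
decreasing_by all_goals (first
  | (have h := List.sizeOf_lt_of_mem hu; simp_wf; omega)
  | (simp_wf; omega))

lemma PTree.myrec {P : PTree → Prop} (heps : P .eps)
    (hw : ∀ t0 t1 rest, P t0 → P t1 → (∀ u ∈ rest, P u) → P (.wedge t0 t1 rest)) :
    ∀ t, P t
  | .eps => heps
  | .wedge t0 t1 rest =>
      hw t0 t1 rest (PTree.myrec heps hw t0) (PTree.myrec heps hw t1)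
        (fun u hu => PTree.myrec heps hw u)
decreasing_by all_goals (first
  | (have h := List.sizeOf_lt_of_mem hu; simp_wf; omega)
  | (simp_wf; omega))

namespace LTree

lemma length_brPaths_eq (t : LTree) : (brPaths t).length = t.brLevels.length := by
  induction t using LTree.myrec with
  | heps => simp
  | hw r t0 t1 rest h0 h1 hr =>
      rw [brPaths_wedge, brLevels_wedge]
      simp only [List.length_append, List.length_map, List.length_cons, List.length_flatten,
        List.map_map]
      have e1 : (List.map (List.length ∘ fun is : List (List ℕ) × ℕ =>
          ([] : List ℕ) :: List.map (fun p => (is.2 + 1) :: p) is.1)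
          (List.map brPaths (t1 :: rest)).zipIdx)
          = List.map ((fun l : List (List ℕ) => l.length + 1) ∘ Prod.fst)
            (List.map brPaths (t1 :: rest)).zipIdx := by
        apply List.map_congr_left; intro is _; simp
      rw [e1, ← List.map_map, List.zipIdx_map_fst, List.map_map, List.map_cons, List.sum_cons]
      have e2 : (rest.map ((fun l : List (List ℕ) => l.length + 1) ∘ brPaths))
          = rest.map (fun u => u.brLevels.length + 1) := by
        apply List.map_congr_left; intro u hu; simp [hr u hu]
      have e3 : (rest.map (List.length ∘ fun u : LTree => r :: u.brLevels))
          = rest.map (fun u => u.brLevels.length + 1) := by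
        apply List.map_congr_left; intro u _; simp [Nat.add_comm]
      rw [e2, e3, h0]
      simp only [Function.comp_apply, h1]
      omega

lemma mem_brLevels_iff_mem_levels (t : LTree) (x : ℕ) :
    x ∈ t.brLevels ↔ x ∈ t.levels := by
  induction t using LTree.myrec with
  | heps => simp
  | hw r t0 t1 rest h0 h1 hr =>
      simp only [brLevels_wedge, levels_wedge, List.mem_append, List.mem_cons,
        List.mem_flatten, List.mem_map]
      constructor
      · rintro ((h | (rfl | h)) | ⟨L, ⟨u, hu, hL⟩, hx⟩)
        · exact Or.inr (Or.inl (Or.inl (h0.1 h)))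
        · exact Or.inl rfl
        · exact Or.inr (Or.inl (Or.inr (h1.1 h)))
        · subst hL
          rcases List.mem_cons.1 hx with rfl | hx
          · exact Or.inl rfl
          · exact Or.inr (Or.inr ⟨u.levels, ⟨u, hu, rfl⟩, (hr u hu).1 hx⟩)
      · rintro (rfl | ((h | h) | ⟨L, ⟨u, hu, hL⟩, hx⟩))
        · exact Or.inl (Or.inr (Or.inl rfl))
        · exact Or.inl (Or.inl (h0.2 h))
        · exact Or.inl (Or.inr (Or.inr (h1.2 h)))
        · subst hL
          exact Or.inr ⟨r :: u.brLevels, ⟨u, hu, rfl⟩,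
            List.mem_cons.2 (Or.inr ((hr u hu).2 hx))⟩

@[simp] lemma levels_addLevels (c : ℕ) (t : LTree) :
    (t.addLevels c).levels = t.levels.map (· + c) := by
  induction t using LTree.myrec with
  | heps => simp
  | hw r t0 t1 rest h0 h1 hr =>
      simp only [addLevels_wedge, levels_wedge, List.map_cons, List.map_append, List.map_map,
        List.map_flatten, h0, h1]
      congr 3
      apply List.map_congr_left; intro u hu; simp [hr u hu]

@[simp] lemma brLevels_addLevels (c : ℕ) (t : LTree) :
    (t.addLevels c).brLevels = t.brLevels.map (· + c) := by
  induction t using LTree.myrec with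
  | heps => simp
  | hw r t0 t1 rest h0 h1 hr =>
      simp only [addLevels_wedge, brLevels_wedge, List.map_cons, List.map_append, List.map_map,
        List.map_flatten, h0, h1]
      congr 2
      apply List.map_congr_left; intro u hu; simp [hr u hu]

@[simp] lemma brPaths_addLevels (c : ℕ) (t : LTree) :
    brPaths (t.addLevels c) = brPaths t := by
  induction t using LTree.myrec with
  | heps => simp
  | hw r t0 t1 rest h0 h1 hr =>
      rw [addLevels_wedge, brPaths_wedge, brPaths_wedge, h0, List.map_cons, List.map_cons,
        h1, List.map_map,
        List.map_congr_left (l := rest) (f := brPaths ∘ addLevels c) (g := brPaths)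
          (fun u hu => hr u hu)]

@[simp] lemma Fgt_addLevels (c : ℕ) (t : LTree) : Fgt (t.addLevels c) = Fgt t := by
  induction t using LTree.myrec with
  | heps => simp
  | hw r t0 t1 rest h0 h1 hr =>
      simp only [addLevels_wedge, Fgt_wedge, h0, h1, List.map_map]
      congr 1
      apply List.map_congr_left; intro u hu; simpa using hr u hu

@[simp] lemma addLevels_zero (t : LTree) : t.addLevels 0 = t := by
  induction t using LTree.myrec with
  | heps => simp
  | hw r t0 t1 rest h0 h1 hr =>
      simp only [addLevels_wedge, h0, h1, Nat.add_zero]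
      congr 1
      exact List.map_congr_left (fun u hu => hr u hu) |>.trans (List.map_id _)

lemma addLevels_addLevels (a b : ℕ) (t : LTree) :
    (t.addLevels a).addLevels b = t.addLevels (a + b) := by
  induction t using LTree.myrec with
  | heps => simp
  | hw r t0 t1 rest h0 h1 hr =>
      simp only [addLevels_wedge, h0, h1, List.map_map, Nat.add_assoc]
      congr 1
      apply List.map_congr_left; intro u hu; simpa using hr u hu

end LTree

namespace LTree

lemma mem_le_foldr_max (l : List ℕ) (x : ℕ) (h : x ∈ l) : x ≤ l.foldr max 0 := by
  induction l with
  | nil => cases h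
  | cons a l ih =>
      rcases List.mem_cons.1 h with rfl | h
      · exact le_max_left _ _
      · exact le_trans (ih h) (le_max_right _ _)

lemma foldr_max_mem (l : List ℕ) (h : l ≠ []) : l.foldr max 0 ∈ l := by
  induction l with
  | nil => simp at h
  | cons a l ih =>
      cases l with
      | nil => simp
      | cons b m =>
          rcases le_total a ((b :: m).foldr max 0) with h' | h'
          · rw [List.foldr_cons, max_eq_right h']
            exact List.mem_cons_of_mem _ (ih (by simp))
          · rw [List.foldr_cons, max_eq_left h']
            exact List.mem_cons_self

lemma foldr_max_map_add (l : List ℕ) (c : ℕ) (h : l ≠ []) :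
    (l.map (· + c)).foldr max 0 = l.foldr max 0 + c := by
  induction l with
  | nil => simp at h
  | cons a l ih =>
      cases l with
      | nil => simp
      | cons b m =>
          rw [List.map_cons, List.foldr_cons, ih (by simp), List.foldr_cons]
          exact (Nat.add_max_add_right _ _ _)

@[simp] lemma numLevels_eps : (LTree.eps).numLevels = 0 := by simp [numLevels]

lemma levels_ne_nil (r : ℕ) (t0 t1 : LTree) (rest : List LTree) :
    (LTree.wedge r t0 t1 rest).levels ≠ [] := by simp

lemma numLevels_addLevels (c r : ℕ) (t0 t1 : LTree) (rest : List LTree) :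
    ((LTree.wedge r t0 t1 rest).addLevels c).numLevels
      = (LTree.wedge r t0 t1 rest).numLevels + c := by
  rw [numLevels, numLevels, levels_addLevels, foldr_max_map_add _ _ (levels_ne_nil r t0 t1 rest)]

lemma le_numLevels_of_mem {t : LTree} {x : ℕ} (h : x ∈ t.levels) : x ≤ t.numLevels :=
  mem_le_foldr_max _ _ h

lemma incrFrom_mono {lo lo' : ℕ} {t : LTree} (h : IncrFrom lo t) (h' : lo' ≤ lo) :
    IncrFrom lo' t := by
  cases h with
  | eps => exact IncrFrom.eps _
  | wedge lo r t0 t1 rest hlr h0 h1 hr =>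
      exact IncrFrom.wedge _ _ _ _ _ (lt_of_le_of_lt h' hlr) h0 h1 hr

lemma lt_of_mem_levels {t : LTree} {lo x : ℕ} (hi : IncrFrom lo t) (h : x ∈ t.levels) :
    lo < x := by
  induction t using LTree.myrec generalizing lo with
  | heps => simp at h
  | hw r t0 t1 rest h0 h1 hr =>
      cases hi with
      | wedge lo r t0 t1 rest hlr i0 i1 ir =>
          rw [levels_wedge] at h
          rcases List.mem_cons.1 h with rfl | h
          · exact hlr
          · rcases List.mem_append.1 h with h | h
            · rcases List.mem_append.1 h with h | h
              · exact lt_trans hlr (h0 i0 h)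
              · exact lt_trans hlr (h1 i1 h)
            · rcases List.mem_flatten.1 h with ⟨L, hL, hx⟩
              rcases List.mem_map.1 hL with ⟨u, hu, rfl⟩
              exact lt_trans hlr (hr u hu (ir u hu) hx)

lemma incrFrom_addLevels {lo : ℕ} {t : LTree} (c : ℕ) (h : IncrFrom lo t) :
    IncrFrom (lo + c) (t.addLevels c) := by
  induction t using LTree.myrec generalizing lo with
  | heps => rw [addLevels_eps]; exact IncrFrom.eps _
  | hw r t0 t1 rest h0 h1 hr =>
      cases h with
      | wedge lo r t0 t1 rest hlr i0 i1 ir =>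
          rw [addLevels_wedge]
          refine IncrFrom.wedge _ _ _ _ _ (by omega) (h0 i0) (h1 i1) ?_
          intro u hu
          rcases List.mem_map.1 hu with ⟨v, hv, rfl⟩
          exact hr v hv (ir v hv)

end LTree

open LTree in
/-- All branchings of `a` are at strictly smaller levels than all branchings of `b`. -/
def Cross (a b : LTree) : Prop := ∀ x ∈ a.brLevels, ∀ y ∈ b.brLevels, x < y

/-- Recursive form of the left-increasing condition. -/
inductive LI : LTree → Prop
  | eps : LI .eps
  | wedge (r : ℕ) (t0 t1 : LTree) (rest : List LTree) :
      LI t0 → LI t1 → (∀ u ∈ rest, LI u) →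
      List.Pairwise Cross (t0 :: t1 :: rest) → LI (.wedge r t0 t1 rest)

lemma Cross.addLevels {a b : LTree} (c : ℕ) (h : Cross a b) :
    Cross (a.addLevels c) (b.addLevels c) := by
  intro x hx y hy
  rw [LTree.brLevels_addLevels] at hx hy
  rcases List.mem_map.1 hx with ⟨x', hx', rfl⟩
  rcases List.mem_map.1 hy with ⟨y', hy', rfl⟩
  simpa using h x' hx' y' hy'

lemma LI.addLevels {t : LTree} (c : ℕ) (h : LI t) : LI (t.addLevels c) := by
  induction h with
  | eps => simpa using LI.eps
  | wedge r t0 t1 rest l0 l1 lr pw ih0 ih1 ihr =>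
      rw [LTree.addLevels_wedge]
      refine LI.wedge _ _ _ _ ih0 ih1 ?_ ?_
      · intro u hu
        rcases List.mem_map.1 hu with ⟨v, hv, rfl⟩
        exact ihr v hv
      · have : (t0.addLevels c :: t1.addLevels c :: rest.map (LTree.addLevels c))
            = (t0 :: t1 :: rest).map (LTree.addLevels c) := by simp
        rw [this, List.pairwise_map]
        exact pw.imp (fun h => h.addLevels c)

open LTree

/-- Branch levels lie in `[1, numLevels]`. -/
def Bnd (u : LTree) : Prop := ∀ x ∈ u.brLevels, 1 ≤ x ∧ x ≤ u.numLevels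

lemma bnd_of_incrFrom {u : LTree} (h : IncrFrom 0 u) : Bnd u := fun x hx =>
  ⟨lt_of_mem_levels h ((mem_brLevels_iff_mem_levels _ _).1 hx),
    le_numLevels_of_mem ((mem_brLevels_iff_mem_levels _ _).1 hx)⟩

lemma mem_incList {v : LTree} {b : ℕ} {l : List LTree} (h : v ∈ incList b l) :
    ∃ u ∈ l, ∃ b', b ≤ b' ∧ v = u.addLevels b' := by
  induction l generalizing b with
  | nil => simp [incList] at h
  | cons u l ih =>
      rw [incList] at h
      rcases List.mem_cons.1 h with rfl | h
      · exact ⟨u, List.mem_cons_self, b, le_rfl, rfl⟩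
      · rcases ih h with ⟨w, hw, b', hb', rfl⟩
        exact ⟨w, List.mem_cons_of_mem _ hw, b', by omega, rfl⟩

lemma incList_lb {b : ℕ} {l : List LTree} (hB : ∀ u ∈ l, Bnd u) :
    ∀ v ∈ incList b l, ∀ y ∈ v.brLevels, b + 1 ≤ y := by
  intro v hv y hy
  rcases mem_incList hv with ⟨u, hu, b', hb', rfl⟩
  rw [brLevels_addLevels] at hy
  rcases List.mem_map.1 hy with ⟨y', hy', rfl⟩
  have := (hB u hu y' hy').1
  omega

lemma incList_pairwise {l : List LTree} (hB : ∀ u ∈ l, Bnd u) (b : ℕ) :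
    List.Pairwise Cross (incList b l) := by
  induction l generalizing b with
  | nil => simp [incList]
  | cons u l ih =>
      rw [incList]
      refine List.pairwise_cons.2 ⟨?_, ih (fun w hw => hB w (List.mem_cons_of_mem _ hw)) _⟩
      intro v hv x hx y hy
      rw [brLevels_addLevels] at hx
      rcases List.mem_map.1 hx with ⟨x', hx', rfl⟩
      have hx'' := (hB u (List.mem_cons_self) x' hx').2
      have hy' := incList_lb (fun w hw => hB w (List.mem_cons_of_mem _ hw)) v hv y hy
      omega

lemma incrFrom_Inc (s : PTree) : IncrFrom 0 (Inc s) := by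
  induction s using PTree.myrec with
  | heps => rw [Inc_eps]; exact IncrFrom.eps _
  | hw t0 t1 rest h0 h1 hr =>
      rw [Inc_wedge]
      refine IncrFrom.wedge _ _ _ _ _ (by omega) ?_ ?_ ?_
      · simpa using incrFrom_addLevels 1 h0
      · exact incrFrom_mono (by simpa using incrFrom_addLevels (1 + (Inc t0).numLevels) h1)
          (by omega)
      · intro v hv
        rcases mem_incList hv with ⟨u, hu, b', hb', rfl⟩
        rcases List.mem_map.1 hu with ⟨w, hw, rfl⟩
        exact incrFrom_mono (by simpa using incrFrom_addLevels b' (hr w hw)) (by omega)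

lemma incList_cons_cons (a b : LTree) (l : List LTree) :
    a.addLevels 1 :: b.addLevels (1 + a.numLevels) ::
        incList (1 + a.numLevels + b.numLevels) l
      = incList 1 (a :: b :: l) := by
  simp [incList]

lemma LI_Inc (s : PTree) : LI (Inc s) := by
  induction s using PTree.myrec with
  | heps => rw [Inc_eps]; exact LI.eps
  | hw t0 t1 rest h0 h1 hr =>
      rw [Inc_wedge]
      refine LI.wedge _ _ _ _ (h0.addLevels 1) (h1.addLevels _) ?_ ?_
      · intro v hv
        rcases mem_incList hv with ⟨u, hu, b', hb', rfl⟩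
        rcases List.mem_map.1 hu with ⟨w, hw, rfl⟩
        exact (hr w hw).addLevels b'
      · rw [incList_cons_cons]
        refine incList_pairwise ?_ 1
        intro u hu
        rcases List.mem_cons.1 hu with rfl | hu
        · exact bnd_of_incrFrom (incrFrom_Inc t0)
        rcases List.mem_cons.1 hu with rfl | hu
        · exact bnd_of_incrFrom (incrFrom_Inc t1)
        rcases List.mem_map.1 hu with ⟨w, hw, rfl⟩
        exact bnd_of_incrFrom (incrFrom_Inc w)

lemma mem_foldr_union {x : ℕ} (Ls : List (Finset ℕ)) :
    x ∈ Ls.foldr (· ∪ ·) ∅ ↔ ∃ A ∈ Ls, x ∈ A := by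
  induction Ls with
  | nil => simp
  | cons A Ls ih => simp [ih]

lemma ordered_cover : ∀ (Ls : List (Finset ℕ)) (a M : ℕ),
    Ls.Pairwise (fun A B => ∀ x ∈ A, ∀ y ∈ B, x < y) →
    Ls.foldr (· ∪ ·) ∅ = Finset.Icc (a+1) M →
    ∀ i < Ls.length,
      Ls.getD i ∅ = Finset.Icc (a + ((Ls.map Finset.card).take i).sum + 1)
        (a + ((Ls.map Finset.card).take (i+1)).sum) := by
  intro Ls
  induction Ls with
  | nil => intro a M _ _ i hi; simp at hi
  | cons L T ih =>
      intro a M pw hU i hi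
      have hsplit : L ∪ T.foldr (· ∪ ·) ∅ = Finset.Icc (a+1) M := by simpa using hU
      have hcrossT : ∀ x ∈ L, ∀ y ∈ T.foldr (· ∪ ·) ∅, x < y := by
        intro x hx y hy
        rcases (mem_foldr_union T).1 hy with ⟨B, hB, hyB⟩
        exact (List.pairwise_cons.1 pw).1 B hB x hx y hyB
      have hLsub : L ⊆ Finset.Icc (a+1) M := fun x hx => hsplit ▸ Finset.mem_union_left _ hx
      have hdc : ∀ x ∈ L, ∀ y, a+1 ≤ y → y ≤ x → y ∈ L := by
        intro x hx y hy1 hy2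
        have hyI : y ∈ Finset.Icc (a+1) M := by
          have := Finset.mem_Icc.1 (hLsub hx)
          exact Finset.mem_Icc.2 ⟨hy1, le_trans hy2 this.2⟩
        have : y ∈ L ∪ T.foldr (· ∪ ·) ∅ := hsplit ▸ hyI
        rcases Finset.mem_union.1 this with h | h
        · exact h
        · exact absurd (hcrossT x hx y h) (by omega)
      have hLIcc : L = Finset.Icc (a+1) (a + L.card) := by
        have hub : ∀ x ∈ L, x ≤ a + L.card := by
          intro x hx
          have hsub : Finset.Icc (a+1) x ⊆ L := by
            intro y hy
            exact hdc x hx y (Finset.mem_Icc.1 hy).1 (Finset.mem_Icc.1 hy).2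
          have := Finset.card_le_card hsub
          rw [Nat.card_Icc] at this
          omega
        have hsub2 : L ⊆ Finset.Icc (a+1) (a + L.card) := fun x hx =>
          Finset.mem_Icc.2 ⟨(Finset.mem_Icc.1 (hLsub hx)).1, hub x hx⟩
        exact Finset.eq_of_subset_of_card_le hsub2 (by rw [Nat.card_Icc]; omega)
      have hT : T.foldr (· ∪ ·) ∅ = Finset.Icc (a + L.card + 1) M := by
        ext x
        constructor
        · intro hx
          have hx1 := Finset.mem_Icc.1 (hsplit ▸ Finset.mem_union_right L hx)
          have hxL : x ∉ L := fun h => absurd (hcrossT x h x hx) (by omega)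
          rw [hLIcc, Finset.mem_Icc] at hxL
          exact Finset.mem_Icc.2 ⟨by omega, hx1.2⟩
        · intro hx
          have hx1 := Finset.mem_Icc.1 hx
          have : x ∈ L ∪ T.foldr (· ∪ ·) ∅ := by
            rw [hsplit]; exact Finset.mem_Icc.2 ⟨by omega, hx1.2⟩
          rcases Finset.mem_union.1 this with h | h
          · rw [hLIcc, Finset.mem_Icc] at h; omega
          · exact h
      cases i with
      | zero => simpa using hLIcc
      | succ j =>
          have hj : j < T.length := by simpa using hi
          have := ih (a + L.card) M (List.Pairwise.of_cons pw) hT j hj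
          simp only [List.getD_cons_succ, List.map_cons, List.take_succ_cons, List.sum_cons]
          rw [this]
          congr 1 <;> omega

namespace LTree

lemma toFinset_flatten (L : List (List ℕ)) :
    L.flatten.toFinset = (L.map List.toFinset).foldr (· ∪ ·) ∅ := by
  induction L with
  | nil => simp
  | cons l L ih => simp [ih]

lemma toFinset_levels_wedge (r : ℕ) (t0 t1 : LTree) (rest : List LTree) :
    (LTree.wedge r t0 t1 rest).levels.toFinset
      = insert r (((t0 :: t1 :: rest).map (fun u => u.levels.toFinset)).foldr (· ∪ ·) ∅) := by
  rw [levels_wedge]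
  simp only [List.toFinset_cons, List.toFinset_append, toFinset_flatten, List.map_cons,
    List.foldr_cons, List.map_map]
  rw [Finset.union_assoc]
  rfl

end LTree

lemma map_addLevels_incList (c b : ℕ) (l : List LTree) :
    (incList b l).map (LTree.addLevels c) = incList (b + c) l := by
  induction l generalizing b with
  | nil => simp [incList]
  | cons u l ih =>
      rw [incList, incList, List.map_cons, LTree.addLevels_addLevels, ih]
      congr 2
      omega

lemma sum_take_succ (l : List ℕ) (i : ℕ) (h : i < l.length) :
    (l.take (i+1)).sum = (l.take i).sum + l.getD i 0 := by
  induction l generalizing i with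
  | nil => simp at h
  | cons a l ih =>
      cases i with
      | zero => simp
      | succ j =>
          simp only [List.take_succ_cons, List.sum_cons, List.getD_cons_succ]
          rw [ih j (by simpa using h)]
          omega

lemma getD_mem {α : Type} (l : List α) (i : ℕ) (h : i < l.length) (d : α) :
    l.getD i d ∈ l := by
  rw [List.getD_eq_getElem l d h]
  exact List.getElem_mem h

lemma incList_restore (l : List LTree) : ∀ (base : ℕ),
    (∀ i, ∀ h : i < l.length, (Inc (Fgt (l.getD i .eps))).addLevels
        (base + ((l.map (fun u => (Inc (Fgt u)).numLevels)).take i).sum) = l.getD i .eps) →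
    incList base (l.map (fun u => Inc (Fgt u))) = l := by
  induction l with
  | nil => intro base _; simp [incList]
  | cons u l ih =>
      intro base h
      rw [List.map_cons, incList]
      have h0 := h 0 (by simp)
      simp only [List.getD_cons_zero, List.take_zero, List.sum_nil, Nat.add_zero] at h0
      rw [h0]
      congr 1
      refine ih (base + (Inc (Fgt u)).numLevels) ?_
      intro i hi
      have h' := h (i+1) (by simpa using hi)
      simp only [List.getD_cons_succ, List.map_cons, List.take_succ_cons, List.sum_cons] at h'
      rw [Nat.add_assoc]
      exact h'

/-- The number of distinct levels of a tree. -/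
def nlev (u : LTree) : ℕ := u.levels.toFinset.card

lemma main_inv (t : LTree) : ∀ (c : ℕ), IncrFrom c t →
    t.levels.toFinset = Finset.Icc (c+1) t.numLevels → LI t →
    (Inc (Fgt t)).addLevels c = t := by
  induction t using LTree.myrec with
  | heps => intro c _ _ _; simp
  | hw r t0 t1 rest ih0 ih1 ihr =>
      intro c hinc hlev hli
      set M := (LTree.wedge r t0 t1 rest).numLevels with hM
      -- uniform facts about children
      set chl : List LTree := t0 :: t1 :: rest with hchl
      have hIncr : ∀ u ∈ chl, IncrFrom r u := by
        cases hinc with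
        | wedge _ _ _ _ _ hlr i0 i1 irr =>
            intro u hu
            rcases List.mem_cons.1 hu with rfl | hu
            · exact i0
            rcases List.mem_cons.1 hu with rfl | hu
            · exact i1
            · exact irr u hu
      have hcr : c < r := by cases hinc with | wedge _ _ _ _ _ hlr _ _ _ => exact hlr
      have hLIu : ∀ u ∈ chl, LI u := by
        cases hli with
        | wedge _ _ _ _ l0 l1 lr _ =>
            intro u hu
            rcases List.mem_cons.1 hu with rfl | hu
            · exact l0
            rcases List.mem_cons.1 hu with rfl | hu
            · exact l1
            · exact lr u hu
      have hpwC : List.Pairwise Cross chl := by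
        cases hli with | wedge _ _ _ _ _ _ _ pw => exact pw
      have hIH : ∀ u ∈ chl, ∀ c', IncrFrom c' u →
          u.levels.toFinset = Finset.Icc (c'+1) u.numLevels → LI u →
          (Inc (Fgt u)).addLevels c' = u := by
        intro u hu
        rcases List.mem_cons.1 hu with rfl | hu
        · exact ih0
        rcases List.mem_cons.1 hu with rfl | hu
        · exact ih1
        · exact ihr u hu
      -- the union structure
      set Lsets : List (Finset ℕ) := chl.map (fun u => u.levels.toFinset) with hLsets
      have hlevW : insert r (Lsets.foldr (· ∪ ·) ∅) = Finset.Icc (c+1) M := by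
        rw [← LTree.toFinset_levels_wedge]; exact hlev
      have hgt : ∀ u ∈ chl, ∀ x ∈ u.levels, r < x := fun u hu x hx =>
        lt_of_mem_levels (hIncr u hu) hx
      have hrMem : r ∈ Finset.Icc (c+1) M := hlevW ▸ Finset.mem_insert_self _ _
      have hrc : r = c + 1 := by
        have h1 : c + 1 ∈ Finset.Icc (c+1) M := by
          have := Finset.mem_Icc.1 hrMem; exact Finset.mem_Icc.2 ⟨le_rfl, by omega⟩
        rw [← hlevW] at h1
        rcases Finset.mem_insert.1 h1 with h | h
        · omega
        · exfalso
          rcases (mem_foldr_union _).1 h with ⟨A, hA, hcA⟩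
          rcases List.mem_map.1 hA with ⟨u, hu, rfl⟩
          have := hgt u hu _ (List.mem_toFinset.1 hcA)
          have := Finset.mem_Icc.1 hrMem
          omega
      have hU : Lsets.foldr (· ∪ ·) ∅ = Finset.Icc (c+1+1) M := by
        ext x
        constructor
        · intro hx
          have hx1 : x ∈ Finset.Icc (c+1) M := hlevW ▸ Finset.mem_insert_of_mem hx
          rcases (mem_foldr_union _).1 hx with ⟨A, hA, hxA⟩
          rcases List.mem_map.1 hA with ⟨u, hu, rfl⟩
          have := hgt u hu _ (List.mem_toFinset.1 hxA)
          have := Finset.mem_Icc.1 hx1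
          exact Finset.mem_Icc.2 ⟨by omega, by omega⟩
        · intro hx
          have hx1 := Finset.mem_Icc.1 hx
          have : x ∈ insert r (Lsets.foldr (· ∪ ·) ∅) := by
            rw [hlevW]; exact Finset.mem_Icc.2 ⟨by omega, hx1.2⟩
          rcases Finset.mem_insert.1 this with h | h
          · omega
          · exact h
      have hpwL : Lsets.Pairwise (fun A B => ∀ x ∈ A, ∀ y ∈ B, x < y) := by
        rw [hLsets, List.pairwise_map]
        refine hpwC.imp ?_
        intro a b hab x hx y hy
        exact hab x ((mem_brLevels_iff_mem_levels a x).2 (List.mem_toFinset.1 hx))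
          y ((mem_brLevels_iff_mem_levels b y).2 (List.mem_toFinset.1 hy))
      have hblocks := ordered_cover Lsets (c+1) M hpwL hU
      have hmapcard : Lsets.map Finset.card = chl.map nlev := by
        rw [hLsets, List.map_map]; rfl
      -- per-child facts
      have claim : ∀ i, ∀ _ : i < chl.length, ∀ u, chl.getD i .eps = u →
          ((Inc (Fgt u)).addLevels ((c+1) + ((chl.map nlev).take i).sum) = u)
            ∧ (Inc (Fgt u)).numLevels = nlev u := by
        intro i hi u hget
        have hu : u ∈ chl := hget ▸ getD_mem chl i hi .eps
        set ci := (c+1) + ((chl.map nlev).take i).sum with hci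
        have hLi : u.levels.toFinset = Finset.Icc (ci+1) (ci + nlev u) := by
          have hlen : i < Lsets.length := by simpa [hLsets] using hi
          have hchlu : chl[i] = u := by rw [← List.getD_eq_getElem chl .eps hi]; exact hget
          have hgetD : Lsets.getD i ∅ = u.levels.toFinset := by
            rw [List.getD_eq_getElem _ _ hlen]
            simp only [hLsets, List.getElem_map]
            rw [hchlu]
          have hb := hblocks i hlen
          rw [hgetD, hmapcard] at hb
          have hgd : (chl.map nlev).getD i 0 = nlev u := by
            rw [List.getD_eq_getElem _ _ (by simpa using hi), List.getElem_map, hchlu]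
          rw [hb, sum_take_succ _ i (by simpa using hi), hgd]
          congr 1 <;> omega
        cases u with
        | eps => constructor <;> simp [nlev]
        | wedge r' a b l =>
            have hne : (LTree.wedge r' a b l).levels ≠ [] := levels_ne_nil _ _ _ _
            have hnumMem : (LTree.wedge r' a b l).numLevels ∈ (LTree.wedge r' a b l).levels :=
              foldr_max_mem _ hne
            have hnum_ub := (Finset.mem_Icc.1 (hLi ▸ List.mem_toFinset.2 hnumMem))
            have hnum_lb : ci + nlev (LTree.wedge r' a b l)
                ≤ (LTree.wedge r' a b l).numLevels := by
              have hmem : ci + nlev (LTree.wedge r' a b l)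
                  ∈ (LTree.wedge r' a b l).levels.toFinset := by
                rw [hLi]
                exact Finset.mem_Icc.2 ⟨by omega, le_rfl⟩
              exact le_numLevels_of_mem (List.mem_toFinset.1 hmem)
            have hnumEq : (LTree.wedge r' a b l).numLevels
                = ci + nlev (LTree.wedge r' a b l) := le_antisymm hnum_ub.2 hnum_lb
            have hIncCi : IncrFrom ci (LTree.wedge r' a b l) := by
              have hir : IncrFrom r (LTree.wedge r' a b l) := hIncr _ hu
              cases hir with
              | wedge _ _ _ _ _ hlr j0 j1 jr =>
                  refine IncrFrom.wedge _ _ _ _ _ ?_ j0 j1 jr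
                  have hr'm : r' ∈ (LTree.wedge r' a b l).levels.toFinset := by simp
                  rw [hLi] at hr'm
                  have := Finset.mem_Icc.1 hr'm
                  omega
            have hE : (Inc (Fgt (LTree.wedge r' a b l))).addLevels ci
                = LTree.wedge r' a b l := by
              refine hIH _ hu ci hIncCi ?_ (hLIu _ hu)
              rw [hnumEq]
              exact hLi
            refine ⟨hE, ?_⟩
            cases hX : Inc (Fgt (LTree.wedge r' a b l)) with
            | eps => rw [hX] at hE; simp at hE
            | wedge rx x0 x1 xl =>
                rw [hX] at hE
                have := numLevels_addLevels ci rx x0 x1 xl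
                rw [hE] at this
                omega
      have hmapnum : chl.map (fun u => (Inc (Fgt u)).numLevels) = chl.map nlev := by
        apply List.map_congr_left
        intro u hu
        obtain ⟨⟨i, hi⟩, hget⟩ := List.mem_iff_get.1 hu
        exact (claim i hi u (by rw [List.getD_eq_getElem _ _ hi]; exact hget)).2
      have key := incList_restore chl (c+1) (by
        intro i hi
        rw [hmapnum]
        exact (claim i hi _ rfl).1)
      rw [hchl, List.map_cons, List.map_cons, incList, incList] at key
      injection key with e0 key'
      injection key' with e1 e2
      rw [Fgt_wedge, Inc_wedge, addLevels_wedge, addLevels_addLevels, addLevels_addLevels,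
        map_addLevels_incList, List.map_map]
      congr 1
      · omega
      · rw [show 1 + c = c + 1 from by omega]
        exact e0
      · rw [show 1 + (Inc (Fgt t0)).numLevels + c = c + 1 + (Inc (Fgt t0)).numLevels
          from by omega]
        exact e1
      · rw [show 1 + (Inc (Fgt t0)).numLevels + (Inc (Fgt t1)).numLevels + c
            = c + 1 + (Inc (Fgt t0)).numLevels + (Inc (Fgt t1)).numLevels from by omega]
        exact e2

/-- The comparison relation on (path, level) pairs. -/
def R' : List ℕ × ℕ → List ℕ × ℕ → Prop := fun a b => ¬ OnCommonPath a.1 b.1 → a.2 < b.2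

/-- The list of (path, level) pairs of the branchings of `t`. -/
def Z (t : LTree) : List (List ℕ × ℕ) := (brPaths t).zip t.brLevels

/-- The pairwise form of the left-to-right condition. -/
def PC (t : LTree) : Prop := List.Pairwise R' (Z t)

lemma onCommonPath_nil_left (q : List ℕ) : OnCommonPath [] q := Or.inl (List.nil_prefix)

lemma onCommonPath_nil_right (p : List ℕ) : OnCommonPath p [] := Or.inr (List.nil_prefix)

lemma onCommonPath_cons_cons {a b : ℕ} {p q : List ℕ} :
    OnCommonPath (a :: p) (b :: q) ↔ a = b ∧ OnCommonPath p q := by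
  unfold OnCommonPath
  rw [List.cons_prefix_cons, List.cons_prefix_cons]
  constructor
  · rintro (⟨h1, h2⟩ | ⟨h1, h2⟩)
    · exact ⟨h1, Or.inl h2⟩
    · exact ⟨h1.symm, Or.inr h2⟩
  · rintro ⟨rfl, h2 | h2⟩
    · exact Or.inl ⟨rfl, h2⟩
    · exact Or.inr ⟨rfl, h2⟩

lemma R'_nil_left (x : ℕ) (b : List ℕ × ℕ) : R' ([], x) b :=
  fun h => absurd (onCommonPath_nil_left b.1) h

lemma R'_nil_right (a : List ℕ × ℕ) (y : ℕ) : R' a ([], y) :=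
  fun h => absurd (onCommonPath_nil_right a.1) h

lemma R'_cons_cons_iff (k : ℕ) (p q : List ℕ) (x y : ℕ) :
    R' (k :: p, x) (k :: q, y) ↔ R' (p, x) (q, y) := by
  unfold R'
  simp only [onCommonPath_cons_cons]
  tauto

lemma R'_cons_ne (k k' : ℕ) (hk : k ≠ k') (p q : List ℕ) (x y : ℕ) :
    R' (k :: p, x) (k' :: q, y) ↔ x < y := by
  unfold R'
  simp only [onCommonPath_cons_cons]
  tauto

lemma exists_mem_zip {α β : Type} :
    ∀ (l1 : List α) (l2 : List β), l1.length = l2.length → ∀ y ∈ l2, ∃ x, (x, y) ∈ l1.zip l2 := by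
  intro l1
  induction l1 with
  | nil => intro l2 h y hy; cases l2 <;> simp_all
  | cons a l1 ih =>
      intro l2 h y hy
      cases l2 with
      | nil => simp at hy
      | cons b l2 =>
          rcases List.mem_cons.1 hy with rfl | hy
          · exact ⟨a, by simp⟩
          · rcases ih l2 (by simpa using h) y hy with ⟨x, hx⟩
            exact ⟨x, List.mem_cons_of_mem _ hx⟩

lemma snd_mem_brLevels {u : LTree} {a : List ℕ × ℕ} (h : a ∈ Z u) : a.2 ∈ u.brLevels := by
  obtain ⟨p, x⟩ := a
  exact (List.of_mem_zip h).2

lemma exists_Z_of_mem {u : LTree} {x : ℕ} (h : x ∈ u.brLevels) : ∃ p, (p, x) ∈ Z u :=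
  exists_mem_zip _ _ (length_brPaths_eq u) x h

lemma cross_iff_Z (u v : LTree) :
    Cross u v ↔ ∀ a ∈ Z u, ∀ b ∈ Z v, a.2 < b.2 := by
  constructor
  · intro h a ha b hb
    exact h a.2 (snd_mem_brLevels ha) b.2 (snd_mem_brLevels hb)
  · intro h x hx y hy
    rcases exists_Z_of_mem hx with ⟨p, hp⟩
    rcases exists_Z_of_mem hy with ⟨q, hq⟩
    exact h _ hp _ hq

lemma pairwise_R'_map_cons (k : ℕ) (u : LTree) :
    List.Pairwise R' ((Z u).map (fun a => (k :: a.1, a.2))) ↔ List.Pairwise R' (Z u) := by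
  rw [List.pairwise_map]
  constructor
  · exact fun h => h.imp (fun {a b} hab => (R'_cons_cons_iff k a.1 b.1 a.2 b.2).1 hab)
  · exact fun h => h.imp (fun {a b} hab => (R'_cons_cons_iff k a.1 b.1 a.2 b.2).2 hab)

/-- The block of pairs contributed by a child subtree `u` at child index `k`,
preceded by the root branching marker. -/
def block (r k : ℕ) (u : LTree) : List (List ℕ × ℕ) :=
  (([] : List ℕ), r) :: (Z u).map (fun a => (k :: a.1, a.2))

lemma pairwise_block (r k : ℕ) (u : LTree) :
    List.Pairwise R' (block r k u) ↔ PC u := by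
  rw [block, List.pairwise_cons, pairwise_R'_map_cons]
  exact ⟨fun h => h.2, fun h => ⟨fun a' _ => R'_nil_left r a', h⟩⟩

lemma block_cross_iff (r k k' : ℕ) (hk : k ≠ k') (u v : LTree) :
    (∀ x ∈ block r k u, ∀ y ∈ block r k' v, R' x y) ↔ Cross u v := by
  constructor
  · intro H
    rw [cross_iff_Z]
    intro a ha b hb
    have := H (k :: a.1, a.2)
      (by rw [block]; exact List.mem_cons_of_mem _ (List.mem_map.2 ⟨a, ha, rfl⟩))
      (k' :: b.1, b.2)
      (by rw [block]; exact List.mem_cons_of_mem _ (List.mem_map.2 ⟨b, hb, rfl⟩))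
    exact (R'_cons_ne k k' hk _ _ _ _).1 this
  · intro H x hx y hy
    rw [block] at hx hy
    rcases List.mem_cons.1 hx with rfl | hx
    · exact R'_nil_left _ _
    rcases List.mem_cons.1 hy with rfl | hy
    · exact R'_nil_right _ _
    rcases List.mem_map.1 hx with ⟨a, ha, rfl⟩
    rcases List.mem_map.1 hy with ⟨b, hb, rfl⟩
    exact (R'_cons_ne k k' hk _ _ _ _).2 ((cross_iff_Z u v).1 H a ha b hb)

lemma exists_enumFrom_of_mem {α : Type} {x : α} {l : List α} (h : x ∈ l) :
    ∀ n : ℕ, ∃ i, n ≤ i ∧ (x, i) ∈ l.zipIdx n := by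
  induction l with
  | nil => cases h
  | cons a l ih =>
      intro n
      rcases List.mem_cons.1 h with rfl | h
      · exact ⟨n, le_rfl, by rw [List.zipIdx_cons]; exact List.mem_cons_self⟩
      · rcases ih h (n+1) with ⟨i, hi, hmem⟩
        exact ⟨i, by omega, by rw [List.zipIdx_cons]; exact List.mem_cons_of_mem _ hmem⟩

lemma cross_block_flatten (r k : ℕ) (u : LTree) (l : List LTree) (n : ℕ) (hkn : k < n + 1) :
    (∀ x ∈ block r k u,
        ∀ y ∈ ((l.zipIdx n).map (fun iv => block r (iv.2+1) iv.1)).flatten, R' x y)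
      ↔ ∀ v ∈ l, Cross u v := by
  constructor
  · intro H v hv
    obtain ⟨j, hj, hjv⟩ := exists_enumFrom_of_mem hv n
    refine (block_cross_iff r k (j+1) (by omega) u v).1 ?_
    intro x hx y hy
    exact H x hx y (List.mem_flatten.2 ⟨block r (j+1) v, List.mem_map.2 ⟨(v, j), hjv, rfl⟩, hy⟩)
  · intro H x hx y hy
    rcases List.mem_flatten.1 hy with ⟨b, hb, hyb⟩
    rcases List.mem_map.1 hb with ⟨⟨v, j⟩, hjv, rfl⟩
    have hmem := List.mem_zipIdx hjv
    have hvl : v ∈ l := by rw [hmem.2.2]; exact List.getElem_mem _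
    exact (block_cross_iff r k (j+1) (by omega) u v).2 (H v hvl) x hx y hyb

lemma pairwise_blocks (r : ℕ) (l : List LTree) : ∀ n : ℕ,
    List.Pairwise R' (((l.zipIdx n).map (fun iu => block r (iu.2+1) iu.1)).flatten)
      ↔ (∀ u ∈ l, PC u) ∧ List.Pairwise Cross l := by
  induction l with
  | nil => intro n; simp
  | cons u l ih =>
      intro n
      rw [List.zipIdx_cons, List.map_cons, List.flatten_cons, List.pairwise_append,
        pairwise_block, ih (n+1), cross_block_flatten r (n+1) u l (n+1) (by omega),
        List.forall_mem_cons, List.pairwise_cons]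
      tauto

lemma zip_flatten_map {α β γ : Type} (f : γ → List α) (g : γ → List β) (X : List γ)
    (h : ∀ x ∈ X, (f x).length = (g x).length) :
    ((X.map f).flatten).zip ((X.map g).flatten) = (X.map (fun x => (f x).zip (g x))).flatten := by
  induction X with
  | nil => simp
  | cons x X ih =>
      rw [List.map_cons, List.map_cons, List.map_cons, List.flatten_cons, List.flatten_cons,
        List.flatten_cons, List.zip_append (h x (List.mem_cons_self)),
        ih (fun y hy => h y (List.mem_cons_of_mem _ hy))]

lemma Z_wedge (r : ℕ) (t0 t1 : LTree) (rest : List LTree) :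
    Z (.wedge r t0 t1 rest)
      = (Z t0).map (fun a => ((0:ℕ) :: a.1, a.2)) ++
        ((((t1 :: rest).zipIdx 0).map (fun iu => block r (iu.2+1) iu.1)).flatten) := by
  have henum : (t1 :: rest).zipIdx 0 = (t1 :: rest).zipIdx := rfl
  rw [Z, brPaths_wedge, brLevels_wedge, henum]
  have hbl : t0.brLevels ++ r :: t1.brLevels ++ (rest.map (fun u => r :: u.brLevels)).flatten
      = t0.brLevels ++ ((t1 :: rest).map (fun u => r :: u.brLevels)).flatten := by
    rw [List.map_cons, List.flatten_cons, List.append_assoc]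
  rw [hbl]
  have hbl2 : ((t1 :: rest).map (fun u => r :: u.brLevels)).flatten
      = ((t1 :: rest).zipIdx.map (fun iu => r :: iu.1.brLevels)).flatten := by
    have h2 : (t1 :: rest).zipIdx.map (fun iu => r :: iu.1.brLevels)
        = ((t1 :: rest).zipIdx.map Prod.fst).map (fun u => r :: u.brLevels) := by
      rw [List.map_map]; rfl
    rw [h2, List.zipIdx_map_fst]
  have hbp : (((t1 :: rest).map brPaths).zipIdx.map
        (fun is => ([] : List ℕ) :: is.1.map (fun p => (is.2 + 1) :: p)))
      = ((t1 :: rest).zipIdx.map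
        (fun iu => ([] : List ℕ) :: (brPaths iu.1).map (fun p => (iu.2 + 1) :: p))) := by
    rw [List.zipIdx_map, List.map_map]
    rfl
  rw [hbl2, hbp, List.zip_append (by rw [List.length_map, length_brPaths_eq]),
    List.zip_map_left, zip_flatten_map _ _ _ (fun iu _ => by simp [length_brPaths_eq])]
  refine congrArg₂ (· ++ ·) rfl ?_
  refine congrArg List.flatten (List.map_congr_left ?_)
  intro iu _
  rw [List.zip_cons_cons, block, Z, List.zip_map_left]
  rfl

lemma LI_wedge_iff (r : ℕ) (t0 t1 : LTree) (rest : List LTree) :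
    LI (.wedge r t0 t1 rest)
      ↔ LI t0 ∧ LI t1 ∧ (∀ u ∈ rest, LI u) ∧ List.Pairwise Cross (t0 :: t1 :: rest) := by
  constructor
  · intro h
    cases h with
    | wedge _ _ _ _ l0 l1 lr pw => exact ⟨l0, l1, lr, pw⟩
  · rintro ⟨l0, l1, lr, pw⟩
    exact LI.wedge r t0 t1 rest l0 l1 lr pw

lemma PC_iff_LI (t : LTree) : PC t ↔ LI t := by
  induction t using LTree.myrec with
  | heps =>
      constructor
      · intro _; exact LI.eps
      · intro _; rw [PC, Z]; simp
  | hw r t0 t1 rest ih0 ih1 ihr =>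
      rw [PC, Z_wedge, List.pairwise_append, pairwise_R'_map_cons,
        pairwise_blocks r (t1 :: rest) 0, LI_wedge_iff]
      have hbridge : (∀ x ∈ (Z t0).map (fun a => ((0:ℕ) :: a.1, a.2)),
            ∀ y ∈ (((t1 :: rest).zipIdx 0).map (fun iu => block r (iu.2+1) iu.1)).flatten,
            R' x y)
          ↔ ∀ v ∈ t1 :: rest, Cross t0 v := by
        rw [← cross_block_flatten r 0 t0 (t1 :: rest) 0 (by omega)]
        constructor
        · intro H x hx y hy
          rcases List.mem_cons.1 hx with rfl | hx
          · exact R'_nil_left _ _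
          · exact H x hx y hy
        · intro H x hx y hy
          exact H x (List.mem_cons_of_mem _ hx) y hy
      rw [hbridge]
      constructor
      · rintro ⟨l0, ⟨hPCs, hpw⟩, hcr⟩
        refine ⟨ih0.1 l0, ih1.1 (hPCs t1 (List.mem_cons_self)),
          fun u hu => (ihr u hu).1 (hPCs u (List.mem_cons_of_mem _ hu)),
          List.pairwise_cons.2 ⟨hcr, hpw⟩⟩
      · rintro ⟨l0, l1, lr, pw⟩
        have hcr := (List.pairwise_cons.1 pw).1
        have hpw := (List.pairwise_cons.1 pw).2
        refine ⟨ih0.2 l0, ⟨?_, hpw⟩, hcr⟩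
        intro u hu
        rcases List.mem_cons.1 hu with rfl | hu
        · exact ih1.2 l1
        · exact (ihr u hu).2 (lr u hu)

lemma PC_iff_getD (t : LTree) :
    PC t ↔ (∀ i j : ℕ, i < j → j < (brPaths t).length →
      ¬ OnCommonPath ((brPaths t).getD i []) ((brPaths t).getD j []) →
      t.brLevels.getD i 0 < t.brLevels.getD j 0) := by
  have hlen : (Z t).length = (brPaths t).length := by
    rw [Z, List.length_zip, length_brPaths_eq, Nat.min_self]
  have hlen2 : t.brLevels.length = (brPaths t).length := (length_brPaths_eq t).symm
  rw [PC, List.pairwise_iff_get]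
  constructor
  · intro H i j hij hj hnc
    have hjZ : j < (Z t).length := by omega
    have hiZ : i < (Z t).length := by omega
    have := H ⟨i, hiZ⟩ ⟨j, hjZ⟩ hij
    simp only [List.get_eq_getElem, Z, List.getElem_zip] at this
    rw [List.getD_eq_getElem _ _ (by omega : i < t.brLevels.length),
      List.getD_eq_getElem _ _ (by omega : j < t.brLevels.length)]
    refine this ?_
    rwa [List.getD_eq_getElem _ _ (by omega : i < (brPaths t).length),
      List.getD_eq_getElem _ _ (by omega : j < (brPaths t).length)] at hnc
  · intro H i j hij
    simp only [List.get_eq_getElem]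
    simp only [Z, List.getElem_zip]
    intro hnc
    have hi' : (i : ℕ) < (brPaths t).length := by have := i.2; omega
    have hj' : (j : ℕ) < (brPaths t).length := by have := j.2; omega
    have := H i j hij hj' (by
      rwa [List.getD_eq_getElem _ _ hi', List.getD_eq_getElem _ _ hj'])
    rwa [List.getD_eq_getElem _ _ (by omega : (i:ℕ) < t.brLevels.length),
      List.getD_eq_getElem _ _ (by omega : (j:ℕ) < t.brLevels.length)] at this

lemma isIncTree_levels (t : LTree) (h : IsIncTree t) :
    t.levels.toFinset = Finset.Icc (0 + 1) t.numLevels := by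
  rw [Nat.zero_add]; exact h.2

/-- **Lemma.** An increasing tree `(T,λ)` is left increasing (lies in the image
of `Inc`) iff for every pair of branchings `b ≺ b′` (in the left-to-right
order) whose vertices do not lie on a common path connecting a leaf with the
root, one has `λ(b) < λ(b′)`.  (Branchings are recorded by their position `i`
in the natural labelling; their vertices by the root-to-vertex paths
`brPaths`; their levels by `brLevels`.) -/
theorem left_increasing_characterization (t : LTree) (h : IsIncTree t) :
    (∃ s : PTree, Inc s = t) ↔
      (∀ i j : ℕ, i < j → j < (brPaths t).length →
        ¬ OnCommonPath ((brPaths t).getD i []) ((brPaths t).getD j []) →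
        t.brLevels.getD i 0 < t.brLevels.getD j 0) := by
  constructor
  · rintro ⟨s, rfl⟩
    exact (PC_iff_getD _).1 ((PC_iff_LI _).2 (LI_Inc s))
  · intro hcond
    refine ⟨Fgt t, ?_⟩
    have := main_inv t 0 h.1 (isIncTree_levels t h)
      ((PC_iff_LI t).1 ((PC_iff_getD t).2 hcond))
    simpa using this
end
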